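/- arXiv:1305.1025 — 3 statements merged into one kernel-verified Lean document; each statement's English description precedes it below -/
import Mathlib

section
/- Let ℏ > 0, let S ∈ Sp(n) be a real symplectic 2n×2n matrix, and let U be a unitary operator on L²(ℝⁿ) satisfying the symplectic covariance relation U ∘ T^ℏ(z) = T^ℏ(Sz) ∘ U for all z ∈ ℝ^{2n} (as is the case for the metaplectic operator with projection S). Then for every nonzero window φ ∈ L²(ℝⁿ), every countable subset Λ of ℝ^{2n}, and all a, b > 0, the Gabor system G(φ,Λ) is an ℏ-frame with bounds a, b if and only if G(Uφ, SΛ) is an ℏ-frame with bounds a, b. In particular G(φ,Λ) is a tight ℏ-frame if and only if G(Uφ, SΛ) is. -/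
open MeasureTheory Matrix Complex
open scoped RealInnerProductSpace ENNReal

noncomputable section

abbrev E (n : ℕ) : Type := EuclideanSpace ℝ (Fin n)

def toE (n : ℕ) (v : Fin n → ℝ) : E n := WithLp.toLp 2 v
def fromE (n : ℕ) (v : E n) : Fin n → ℝ := v

/-- The Heisenberg–Weyl operator `T^ℏ(z₀)`:
`T^ℏ(z₀)ψ(x) = exp(i(p₀·x − p₀·x₀/2)/ℏ) ψ(x − x₀)`. -/
def HW (n : ℕ) (hb : ℝ) (z₀ : E n × E n) (ψ : E n → ℂ) : E n → ℂ :=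
  fun x => Complex.exp (Complex.I * (((⟪z₀.2, x⟫ - ⟪z₀.2, z₀.1⟫ / 2) / hb : ℝ) : ℂ)) *
    ψ (x - z₀.1)

/-- The frame sum `∑_{z ∈ Λ} |⟨ψ, T^ℏ(z)φ⟩|²`, valued in `ℝ≥0∞`. -/
def gaborSum (n : ℕ) (hb : ℝ) (φ : E n → ℂ) (Λ : Set (E n × E n)) (ψ : E n → ℂ) : ℝ≥0∞ :=
  ∑' z : Λ, ENNReal.ofReal (‖∫ x, ψ x * (starRingEnd ℂ) (HW n hb (z : E n × E n) φ x)‖ ^ 2)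

/-- The Gabor system `G(φ,Λ)` is an `ℏ`-frame with bounds `a`, `b`:
`a‖ψ‖² ≤ ∑_{z∈Λ} |⟨ψ, T^ℏ(z)φ⟩|² ≤ b‖ψ‖²` for every `ψ ∈ L²(ℝⁿ)`. -/
def IsGaborFrame (n : ℕ) (hb : ℝ) (φ : E n → ℂ) (Λ : Set (E n × E n)) (a b : ℝ) : Prop :=
  ∀ ψ : E n → ℂ, MemLp ψ 2 volume →
    (ENNReal.ofReal (a * ∫ x, ‖ψ x‖ ^ 2) ≤ gaborSum n hb φ Λ ψ ∧
      gaborSum n hb φ Λ ψ ≤ ENNReal.ofReal (b * ∫ x, ‖ψ x‖ ^ 2))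

/-- The standard symplectic form `σ(z,z′) = p·x′ − p′·x` on `ℝ²ⁿ = ℝⁿ × ℝⁿ`. -/
def sform (n : ℕ) (z w : E n × E n) : ℝ := ⟪z.2, w.1⟫ - ⟪w.2, z.1⟫

lemma memLp_HW (n : ℕ) (hb : ℝ) (z : E n × E n) (ψ : E n → ℂ)
    (hψ : MemLp ψ 2 volume) : MemLp (HW n hb z ψ) 2 volume := by
  have htr : MemLp (fun x => ψ (x - z.1)) 2 volume :=
    hψ.comp_measurePreserving (measurePreserving_sub_right volume z.1)
  have he : Continuous fun x : E n =>
      Complex.exp (Complex.I * (((⟪z.2, x⟫ - ⟪z.2, z.1⟫ / 2) / hb : ℝ) : ℂ)) := by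
    apply Complex.continuous_exp.comp
    apply continuous_const.mul
    apply Complex.continuous_ofReal.comp
    exact ((continuous_const.inner continuous_id).sub continuous_const).div_const hb
  refine MemLp.of_le htr (he.aestronglyMeasurable.mul htr.aestronglyMeasurable) ?_
  filter_upwards with x
  simp [HW, Complex.norm_exp]

lemma gaborSum_congr (n : ℕ) (hb : ℝ) (φ' : E n → ℂ) (Λ' : Set (E n × E n))
    {ψ ψ' : E n → ℂ} (h : ψ =ᵐ[volume] ψ') :
    gaborSum n hb φ' Λ' ψ = gaborSum n hb φ' Λ' ψ' := by
  unfold gaborSum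
  refine tsum_congr fun z => ?_
  have h2 : (∫ x, ψ x * (starRingEnd ℂ) (HW n hb (z : E n × E n) φ' x)) =
      ∫ x, ψ' x * (starRingEnd ℂ) (HW n hb (z : E n × E n) φ' x) := by
    refine integral_congr_ae ?_
    filter_upwards [h] with x hx
    rw [hx]
  rw [h2]

/-- if `S` is a (linear) symplectic transformation and `U` is a unitary
operator on `L²(ℝⁿ)` satisfying the symplectic covariance relation
`U ∘ T^ℏ(z) = T^ℏ(Sz) ∘ U`, then `G(φ,Λ)` is an `ℏ`-frame with bounds `a,b` iff
`G(Uφ, SΛ)` is, with the same bounds. -/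
theorem stmt5 (n : ℕ) (hb : ℝ) (hhb : 0 < hb)
    (S : (E n × E n) →ₗ[ℝ] (E n × E n))
    (hS : ∀ z w, sform n (S z) (S w) = sform n z w)
    (U : (E n → ℂ) → (E n → ℂ))
    (hUmem : ∀ ψ, MemLp ψ 2 volume → MemLp (U ψ) 2 volume)
    (hUinner : ∀ ψ χ, MemLp ψ 2 volume → MemLp χ 2 volume →
      ∫ x, (starRingEnd ℂ) (U ψ x) * U χ x = ∫ x, (starRingEnd ℂ) (ψ x) * χ x)
    (hUsurj : ∀ ψ, MemLp ψ 2 volume → ∃ χ, MemLp χ 2 volume ∧ U χ =ᵐ[volume] ψ)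
    (hUcov : ∀ ψ z, U (HW n hb z ψ) = HW n hb (S z) (U ψ))
    (φ : E n → ℂ) (hφ : MemLp φ 2 volume) (hφ0 : ¬ φ =ᵐ[volume] (0 : E n → ℂ))
    (Λ : Set (E n × E n)) (hΛ : Λ.Countable) (a b : ℝ) (ha : 0 < a) (hbd : 0 < b) :
    IsGaborFrame n hb φ Λ a b ↔ IsGaborFrame n hb (U φ) ((fun z => S z) '' Λ) a b := by
  -- S is injective
  have hSker : ∀ z, S z = 0 → z = 0 := by
    intro z hz
    have h0 := hS z (-z.2, z.1)
    rw [hz] at h0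
    simp only [sform] at h0
    have h1 : (0 : ℝ) = ⟪z.2, -z.2⟫ - ⟪z.1, z.1⟫ := by
      simpa using h0
    rw [inner_neg_right, real_inner_self_eq_norm_sq, real_inner_self_eq_norm_sq] at h1
    have hz1 : ‖z.1‖ = 0 := by nlinarith [norm_nonneg z.1, norm_nonneg z.2, sq_nonneg ‖z.1‖, sq_nonneg ‖z.2‖]
    have hz2 : ‖z.2‖ = 0 := by nlinarith [norm_nonneg z.1, norm_nonneg z.2]
    exact Prod.ext (norm_eq_zero.mp hz1) (norm_eq_zero.mp hz2)
  have hSinj : Function.Injective S := by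
    intro z w h
    have : S (z - w) = 0 := by rw [map_sub, h, sub_self]
    have := hSker _ this
    exact sub_eq_zero.mp this
  -- conjugation trick
  have hconj : ∀ f g : E n → ℂ,
      (∫ x, f x * (starRingEnd ℂ) (g x)) = (starRingEnd ℂ) (∫ x, (starRingEnd ℂ) (f x) * g x) := by
    intro f g
    rw [← integral_conj]
    congr 1
    funext x
    simp [mul_comm]
  -- norm preservation
  have hnorm : ∀ ψ, MemLp ψ 2 volume → (∫ x, ‖U ψ x‖ ^ 2) = ∫ x, ‖ψ x‖ ^ 2 := by
    intro ψ hψ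
    have h := hUinner ψ ψ hψ hψ
    have hcw : ∀ w : ℂ, (starRingEnd ℂ) w * w = ((‖w‖ ^ 2 : ℝ) : ℂ) := by
      intro w
      rw [mul_comm, Complex.mul_conj]
      simp [Complex.normSq_eq_norm_sq]
    simp only [hcw] at h
    have e1 : (∫ x, ((‖U ψ x‖ ^ 2 : ℝ) : ℂ)) = ((∫ x, ‖U ψ x‖ ^ 2 : ℝ) : ℂ) :=
      integral_ofReal
    have e2 : (∫ x, ((‖ψ x‖ ^ 2 : ℝ) : ℂ)) = ((∫ x, ‖ψ x‖ ^ 2 : ℝ) : ℂ) :=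
      integral_ofReal
    rw [e1, e2] at h
    exact_mod_cast h
  -- key identity
  have hkey : ∀ ψ, MemLp ψ 2 volume → ∀ z : E n × E n,
      (∫ x, U ψ x * (starRingEnd ℂ) (HW n hb (S z) (U φ) x)) =
        ∫ x, ψ x * (starRingEnd ℂ) (HW n hb z φ x) := by
    intro ψ hψ z
    rw [← hUcov φ z, hconj, hconj, hUinner ψ (HW n hb z φ) hψ (memLp_HW n hb z φ hφ)]
  -- gaborSum transformation
  have hgabor : ∀ ψ, MemLp ψ 2 volume →
      gaborSum n hb (U φ) ((fun z => S z) '' Λ) (U ψ) = gaborSum n hb φ Λ ψ := by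
    intro ψ hψ
    unfold gaborSum
    rw [← Equiv.tsum_eq (Equiv.Set.imageOfInjOn (fun z => S z) Λ (hSinj.injOn))]
    refine tsum_congr fun z => ?_
    have : ((Equiv.Set.imageOfInjOn (fun z => S z) Λ hSinj.injOn z : E n × E n)) = S z := rfl
    rw [this, hkey ψ hψ z]
  constructor
  · intro hF ψ hψ
    obtain ⟨χ, hχ, hUχ⟩ := hUsurj ψ hψ
    have h1 : gaborSum n hb (U φ) ((fun z => S z) '' Λ) ψ = gaborSum n hb φ Λ χ := by
      rw [← hgabor χ hχ]
      exact gaborSum_congr n hb (U φ) _ hUχ.symm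
    have h2 : (∫ x, ‖ψ x‖ ^ 2) = ∫ x, ‖χ x‖ ^ 2 := by
      rw [← hnorm χ hχ]
      refine integral_congr_ae ?_
      filter_upwards [hUχ] with x hx
      rw [hx]
    rw [h1, h2]
    exact hF χ hχ
  · intro hF ψ hψ
    have h := hF (U ψ) (hUmem ψ hψ)
    rw [hgabor ψ hψ, hnorm ψ hψ] at h
    exact h
end
end

section
/- Let S = [[A, B],[C, D]] ∈ Sp(n) be a real symplectic matrix written in n×n blocks, and let M be a complex symmetric n×n matrix whose imaginary part Im M is positive definite (i.e. M belongs to the Siegel upper half-space Σₙ⁺). Then the matrix A + BM is invertible, and α(S)M := (C + DM)(A + BM)^{−1} is again a complex symmetric matrix whose imaginary part is positive definite. (Thus (S, M) ↦ α(S)M defines an action of Sp(n) on the Siegel half-space.) -/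
open Matrix
open scoped ComplexOrder

noncomputable section

/-- The standard symplectic matrix `J = [[0, I], [−I, 0]]`. -/
def Jmat (n : ℕ) : Matrix (Fin n ⊕ Fin n) (Fin n ⊕ Fin n) ℝ :=
  Matrix.fromBlocks 0 1 (-1) 0

/-- The complexification of a real matrix. -/
def cplx {n : ℕ} (A : Matrix (Fin n) (Fin n) ℝ) : Matrix (Fin n) (Fin n) ℂ :=
  A.map ((↑) : ℝ → ℂ)

namespace Stmt8Aux

variable {n : ℕ}

lemma cplx_mul (X Y : Matrix (Fin n) (Fin n) ℝ) : cplx (X * Y) = cplx X * cplx Y :=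
  Matrix.map_mul (f := Complex.ofRealHom)

lemma cplx_transpose (X : Matrix (Fin n) (Fin n) ℝ) : cplx Xᵀ = (cplx X)ᵀ :=
  Matrix.transpose_map

lemma cplx_conjTranspose (X : Matrix (Fin n) (Fin n) ℝ) : (cplx X)ᴴ = cplx Xᵀ := by
  ext i j
  simp [cplx, Matrix.conjTranspose_apply, Complex.conj_ofReal]

lemma cplx_one : cplx (1 : Matrix (Fin n) (Fin n) ℝ) = 1 :=
  Matrix.map_one _ Complex.ofReal_zero Complex.ofReal_one

/-- Entrywise: `X - Xᴴ = (2i) • Im X` for a symmetric complex matrix. -/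
lemma sub_conjTranspose (X : Matrix (Fin n) (Fin n) ℂ) (hX : Xᵀ = X) :
    X - Xᴴ = (2 * Complex.I) • cplx (X.map Complex.im) := by
  ext i j
  have h : X j i = X i j := by
    have := congrFun (congrFun hX j) i
    simpa [Matrix.transpose_apply] using this.symm
  simp only [Matrix.sub_apply, Matrix.conjTranspose_apply, Matrix.smul_apply, cplx,
    Matrix.map_apply, h, RCLike.star_def, smul_eq_mul]
  rw [Complex.sub_conj]
  push_cast
  ring

/-- A real matrix whose complexification is positive definite is positive definite. -/
lemma posdef_real {R : Matrix (Fin n) (Fin n) ℝ} (h : (cplx R).PosDef) : R.PosDef := by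
  rw [Matrix.posDef_iff_dotProduct_mulVec]
  constructor
  · have h1 := h.1
    ext i j
    have := congrFun (congrFun h1 i) j
    simp only [cplx, Matrix.conjTranspose_apply, Matrix.map_apply, RCLike.star_def,
      Complex.conj_ofReal] at this
    exact_mod_cast this
  · intro x hx
    have hxc : (fun i => (x i : ℂ)) ≠ 0 := by
      intro hc
      apply hx
      ext i
      have := congrFun hc i
      simpa using this
    have := h.dotProduct_mulVec_pos hxc
    have heq : star (fun i => (x i : ℂ)) ⬝ᵥ (cplx R) *ᵥ (fun i => (x i : ℂ)) =
        ((star x ⬝ᵥ R *ᵥ x : ℝ) : ℂ) := by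
      simp only [dotProduct, Matrix.mulVec, Pi.star_apply, star_trivial, cplx,
        Matrix.map_apply, RCLike.star_def, Complex.conj_ofReal, Complex.ofReal_sum,
        Complex.ofReal_mul]
    rw [heq, Complex.zero_lt_real] at this
    exact this

/-- The complexification of a positive definite real matrix is positive definite. -/
lemma posdef_cplx {R : Matrix (Fin n) (Fin n) ℝ} (h : R.PosDef) : (cplx R).PosDef := by
  have hRsym : Rᵀ = R := h.1
  rw [Matrix.posDef_iff_dotProduct_mulVec]
  constructor
  · show (cplx R)ᴴ = cplx R
    rw [cplx_conjTranspose, hRsym]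
  · intro x hx
    set u : Fin n → ℝ := fun i => (x i).re with hu
    set v : Fin n → ℝ := fun i => (x i).im with hv
    have hre : (star x ⬝ᵥ (cplx R) *ᵥ x).re = u ⬝ᵥ R *ᵥ u + v ⬝ᵥ R *ᵥ v := by
      simp only [dotProduct, Matrix.mulVec, Pi.star_apply, RCLike.star_def, cplx,
        Matrix.map_apply, Complex.re_sum, Complex.mul_re, Complex.conj_re, Complex.conj_im,
        Complex.im_sum, Complex.mul_im, Complex.ofReal_re, Complex.ofReal_im,
        Finset.mul_sum]
      rw [← Finset.sum_add_distrib]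
      refine Finset.sum_congr rfl fun j _ => ?_
      rw [← Finset.sum_add_distrib]
      refine Finset.sum_congr rfl fun k _ => ?_
      ring
    have him : (star x ⬝ᵥ (cplx R) *ᵥ x).im = 0 := by
      have hsym : u ⬝ᵥ R *ᵥ v = v ⬝ᵥ R *ᵥ u := by
        rw [Matrix.dotProduct_mulVec u R v]
        conv_lhs => rw [← hRsym]
        rw [Matrix.vecMul_transpose, dotProduct_comm]
      have : (star x ⬝ᵥ (cplx R) *ᵥ x).im = u ⬝ᵥ R *ᵥ v - v ⬝ᵥ R *ᵥ u := by
        simp only [dotProduct, Matrix.mulVec, Pi.star_apply, RCLike.star_def, cplx,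
          Matrix.map_apply, Complex.im_sum, Complex.mul_im, Complex.conj_re, Complex.conj_im,
          Complex.re_sum, Complex.mul_re, Complex.ofReal_re, Complex.ofReal_im,
          Finset.mul_sum]
        rw [← Finset.sum_sub_distrib]
        refine Finset.sum_congr rfl fun j _ => ?_
        rw [← Finset.sum_sub_distrib]
        refine Finset.sum_congr rfl fun k _ => ?_
        ring
      rw [this, hsym, sub_self]
    have huv : u ≠ 0 ∨ v ≠ 0 := by
      by_contra hc
      push_neg at hc
      apply hx
      ext i
      have h1 := congrFun hc.1 i
      have h2 := congrFun hc.2 i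
      simp only [hu, hv, Pi.zero_apply] at h1 h2
      exact Complex.ext h1 h2
    have hpos : 0 < u ⬝ᵥ R *ᵥ u + v ⬝ᵥ R *ᵥ v := by
      rcases huv with hu0 | hv0
      · have := h.dotProduct_mulVec_pos hu0
        have h2 := h.posSemidef.dotProduct_mulVec_nonneg v
        simp only [star_trivial] at this h2
        linarith
      · have := h.dotProduct_mulVec_pos hv0
        have h2 := h.posSemidef.dotProduct_mulVec_nonneg u
        simp only [star_trivial] at this h2
        linarith
    rw [Complex.lt_def]
    constructor
    · simpa [hre] using hpos
    · simp [him]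

/-- Congruence by an invertible matrix preserves positive definiteness. -/
lemma posdef_conj {N B : Matrix (Fin n) (Fin n) ℂ} (hN : N.PosDef) (hB : IsUnit B) :
    (Bᴴ * N * B).PosDef := by
  rw [Matrix.posDef_iff_dotProduct_mulVec]
  constructor
  · exact Matrix.isHermitian_conjTranspose_mul_mul B hN.1
  · intro x hx
    have hBx : B *ᵥ x ≠ 0 := by
      have hinj := Matrix.mulVec_injective_iff_isUnit.mpr hB
      intro hc
      apply hx
      apply hinj
      rw [hc, Matrix.mulVec_zero]
    have := hN.dotProduct_mulVec_pos hBx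
    simpa only [Matrix.star_mulVec, Matrix.dotProduct_mulVec, Matrix.vecMul_vecMul] using this

end Stmt8Aux

open Stmt8Aux

/-- the symplectic group acts on the Siegel half-space:
if `S = [[A,B],[C,D]]` is symplectic and `M` is complex symmetric with `Im M`
positive definite, then `A + BM` is invertible and `(C + DM)(A + BM)⁻¹` is again
complex symmetric with positive definite imaginary part. -/
theorem stmt8 (n : ℕ) (A B C D : Matrix (Fin n) (Fin n) ℝ)
    (hS : (Matrix.fromBlocks A B C D)ᵀ * Jmat n * Matrix.fromBlocks A B C D = Jmat n)
    (M : Matrix (Fin n) (Fin n) ℂ) (hMsym : Mᵀ = M)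
    (hMim : (M.map Complex.im).PosDef) :
    IsUnit (cplx A + cplx B * M) ∧
      ((cplx C + cplx D * M) * (cplx A + cplx B * M)⁻¹)ᵀ =
        (cplx C + cplx D * M) * (cplx A + cplx B * M)⁻¹ ∧
      ((((cplx C + cplx D * M) * (cplx A + cplx B * M)⁻¹).map Complex.im).PosDef) := by
  -- extract the block relations from the symplectic condition
  rw [Jmat, fromBlocks_transpose, Matrix.fromBlocks_multiply, Matrix.fromBlocks_multiply] at hS
  simp only [Matrix.mul_zero, Matrix.mul_one, zero_add, add_zero,
    Matrix.mul_neg, Matrix.neg_mul] at hS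
  rw [Matrix.fromBlocks_inj] at hS
  obtain ⟨h1, h2, _, h4⟩ := hS
  rw [neg_add_eq_sub, sub_eq_zero] at h1
  rw [neg_add_eq_sub] at h2
  rw [neg_add_eq_sub, sub_eq_zero] at h4
  -- complexified block relations
  have cplx_sub : ∀ X Y : Matrix (Fin n) (Fin n) ℝ, cplx (X - Y) = cplx X - cplx Y := by
    intro X Y
    ext i j
    simp [cplx]
  set A' : Matrix (Fin n) (Fin n) ℂ := cplx A with hA'
  set B' : Matrix (Fin n) (Fin n) ℂ := cplx B with hB'
  set C' : Matrix (Fin n) (Fin n) ℂ := cplx C with hC'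
  set D' : Matrix (Fin n) (Fin n) ℂ := cplx D with hD'
  have e1 : A'ᵀ * C' = C'ᵀ * A' := by
    rw [hA', hC', ← cplx_transpose, ← cplx_transpose, ← cplx_mul, ← cplx_mul, h1]
  have e2 : A'ᵀ * D' - C'ᵀ * B' = 1 := by
    rw [hA', hB', hC', hD', ← cplx_transpose A, ← cplx_transpose C, ← cplx_mul, ← cplx_mul,
      ← cplx_sub, h2, cplx_one]
  have e4 : B'ᵀ * D' = D'ᵀ * B' := by
    rw [hB', hD', ← cplx_transpose, ← cplx_transpose, ← cplx_mul, ← cplx_mul, h4]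
  have e2' : D'ᵀ * A' - B'ᵀ * C' = 1 := by
    have := congrArg Matrix.transpose e2
    simpa [Matrix.transpose_sub, Matrix.transpose_mul] using this
  set Q := A' + B' * M with hQdef
  set P := C' + D' * M with hPdef
  have hQT : Qᵀ = A'ᵀ + M * B'ᵀ := by
    rw [hQdef, Matrix.transpose_add, Matrix.transpose_mul, hMsym]
  have hPT : Pᵀ = C'ᵀ + M * D'ᵀ := by
    rw [hPdef, Matrix.transpose_add, Matrix.transpose_mul, hMsym]
  have hQH : Qᴴ = A'ᵀ + Mᴴ * B'ᵀ := by
    rw [hQdef, Matrix.conjTranspose_add, Matrix.conjTranspose_mul, hA', hB',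
      cplx_conjTranspose, cplx_conjTranspose, cplx_transpose, cplx_transpose]
  have hPH : Pᴴ = C'ᵀ + Mᴴ * D'ᵀ := by
    rw [hPdef, Matrix.conjTranspose_add, Matrix.conjTranspose_mul, hC', hD',
      cplx_conjTranspose, cplx_conjTranspose, cplx_transpose, cplx_transpose]
  -- key identity 1: QᵀP = PᵀQ
  have key1 : Qᵀ * P = Pᵀ * Q := by
    have expand : Qᵀ * P - Pᵀ * Q =
        (A'ᵀ * C' - C'ᵀ * A') + (A'ᵀ * D' - C'ᵀ * B') * M
          - M * (D'ᵀ * A' - B'ᵀ * C') + M * (B'ᵀ * D' - D'ᵀ * B') * M := by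
      rw [hQT, hPT, hQdef, hPdef]
      noncomm_ring
    rw [← sub_eq_zero, expand, e1, e2, e2', e4]
    simp
  -- key identity 2: QᴴP - PᴴQ = M - Mᴴ
  have key2 : Qᴴ * P - Pᴴ * Q = M - Mᴴ := by
    have expand : Qᴴ * P - Pᴴ * Q =
        (A'ᵀ * C' - C'ᵀ * A') + (A'ᵀ * D' - C'ᵀ * B') * M
          - Mᴴ * (D'ᵀ * A' - B'ᵀ * C') + Mᴴ * (B'ᵀ * D' - D'ᵀ * B') * M := by
      rw [hQH, hPH, hQdef, hPdef]
      noncomm_ring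
    rw [expand, e1, e2, e2', e4]
    simp
  set Nc := cplx (M.map Complex.im) with hNc
  have hNcpos : Nc.PosDef := posdef_cplx hMim
  have key3 : M - Mᴴ = (2 * Complex.I) • Nc := sub_conjTranspose M hMsym
  -- invertibility of Q
  have hQunit : IsUnit Q := by
    rw [Matrix.isUnit_iff_isUnit_det, isUnit_iff_ne_zero]
    intro hdet
    obtain ⟨v, hv0, hQv⟩ := Matrix.exists_mulVec_eq_zero_iff.mpr hdet
    have hzero : star v ⬝ᵥ (Qᴴ * P - Pᴴ * Q) *ᵥ v = 0 := by
      rw [Matrix.sub_mulVec, dotProduct_sub]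
      rw [← Matrix.mulVec_mulVec, ← Matrix.mulVec_mulVec]
      have t1 : star v ⬝ᵥ Qᴴ *ᵥ (P *ᵥ v) = 0 := by
        rw [Matrix.dotProduct_mulVec, ← Matrix.star_mulVec, hQv]
        simp
      have t2 : star v ⬝ᵥ Pᴴ *ᵥ (Q *ᵥ v) = 0 := by
        rw [hQv, Matrix.mulVec_zero, dotProduct_zero]
      rw [t1, t2, sub_zero]
    rw [key2, key3] at hzero
    have hpos := hNcpos.dotProduct_mulVec_pos hv0
    rw [Matrix.smul_mulVec, dotProduct_smul, smul_eq_mul] at hzero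
    have h2I : (2 : ℂ) * Complex.I ≠ 0 := by simp [Complex.I_ne_zero]
    exact (mul_ne_zero h2I (ne_of_gt hpos)) hzero
  have hQdet : IsUnit Q.det := Matrix.isUnit_iff_isUnit_det Q |>.mp hQunit
  have hQTdet : IsUnit Qᵀ.det := by rwa [Matrix.det_transpose]
  set α := P * Q⁻¹ with hα
  -- symmetry of α
  have hsym : αᵀ = α := by
    calc αᵀ = Q⁻¹ᵀ * Pᵀ := by rw [hα, Matrix.transpose_mul]
      _ = Qᵀ⁻¹ * Pᵀ := by rw [Matrix.transpose_nonsing_inv]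
      _ = Qᵀ⁻¹ * (Pᵀ * Q * Q⁻¹) := by rw [Matrix.mul_nonsing_inv_cancel_right _ _ hQdet]
      _ = Qᵀ⁻¹ * (Qᵀ * (P * Q⁻¹)) := by rw [← key1, Matrix.mul_assoc]
      _ = P * Q⁻¹ := by rw [Matrix.nonsing_inv_mul_cancel_left _ _ hQTdet]
  -- positive definiteness of Im α
  have hQinv_unit : IsUnit Q⁻¹ :=
    (Matrix.isUnit_iff_isUnit_det _).mpr (Q.isUnit_nonsing_inv_det hQdet)
  have key4 : α - αᴴ = Q⁻¹ᴴ * (Qᴴ * P - Pᴴ * Q) * Q⁻¹ := by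
    have hQQ : Q⁻¹ᴴ * Qᴴ = 1 := by
      rw [← Matrix.conjTranspose_mul, Matrix.mul_nonsing_inv _ hQdet, Matrix.conjTranspose_one]
    calc α - αᴴ = Q⁻¹ᴴ * Qᴴ * (P * Q⁻¹) - Q⁻¹ᴴ * (Pᴴ * (Q * Q⁻¹)) := by
          rw [hQQ, Matrix.mul_nonsing_inv _ hQdet, Matrix.mul_one, Matrix.one_mul, hα,
            Matrix.conjTranspose_mul]
      _ = Q⁻¹ᴴ * (Qᴴ * P - Pᴴ * Q) * Q⁻¹ := by
          rw [Matrix.mul_sub, Matrix.sub_mul]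
          congr 1 <;> noncomm_ring
  have key5 : cplx (α.map Complex.im) = Q⁻¹ᴴ * Nc * Q⁻¹ := by
    have lhs : α - αᴴ = (2 * Complex.I) • cplx (α.map Complex.im) :=
      sub_conjTranspose α hsym
    have rhs : α - αᴴ = (2 * Complex.I) • (Q⁻¹ᴴ * Nc * Q⁻¹) := by
      rw [key4, key2, key3, Matrix.mul_smul, Matrix.smul_mul]
    have h2I : (2 * Complex.I) ≠ 0 := by simp [Complex.I_ne_zero]
    have := lhs.symm.trans rhs
    exact smul_right_injective _ h2I this
  have hαim : ((α.map Complex.im)).PosDef := by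
    apply posdef_real
    rw [key5]
    exact posdef_conj hNcpos hQinv_unit
  exact ⟨hQunit, hsym, hαim⟩
end
end

section
/- Let S = [[A, B],[C, D]] ∈ Sp(n) be a real symplectic matrix written in n×n blocks. Then: (i) the real matrix A A^T + B B^T is symmetric positive definite; (ii) the complex matrix A + iB is invertible; and (iii) the matrix (C + iD)(A + iB)^{−1} has real part (C A^T + D B^T)(A A^T + B B^T)^{−1} and imaginary part (A A^T + B B^T)^{−1}; in particular its imaginary part is symmetric positive definite. -/
open Matrix

noncomputable section

section Aux

variable {n : ℕ} (X Y : Matrix (Fin n) (Fin n) ℝ)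

lemma cplx_add : cplx (X + Y) = cplx X + cplx Y := by
  ext i j; simp [cplx]

lemma cplx_mul : cplx (X * Y) = cplx X * cplx Y := by
  ext i j; simp [cplx, Matrix.mul_apply]

lemma cplx_sub : cplx (X - Y) = cplx X - cplx Y := by
  ext i j; simp [cplx]

lemma cplx_one : cplx (1 : Matrix (Fin n) (Fin n) ℝ) = 1 := by
  ext i j; simp [cplx, Matrix.one_apply, apply_ite]

lemma cplx_conjT : (cplx X)ᴴ = cplx Xᵀ := by
  ext i j; simp [cplx, Matrix.conjTranspose_apply]

lemma cplx_det : (cplx X).det = (X.det : ℂ) := by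
  have := (RingHom.map_det Complex.ofRealHom X).symm
  exact this

lemma cplx_map_re : (cplx X + Complex.I • cplx Y).map Complex.re = X := by
  ext i j; simp [cplx]

lemma cplx_map_im : (cplx X + Complex.I • cplx Y).map Complex.im = Y := by
  ext i j; simp [cplx]

lemma posdef_G (A B C D : Matrix (Fin n) (Fin n) ℝ)
    (h : D * Aᵀ - C * Bᵀ = 1) : (A * Aᵀ + B * Bᵀ).PosDef := by
  have hsd : (A * Aᵀ + B * Bᵀ).PosSemidef := by
    have ha := Matrix.posSemidef_self_mul_conjTranspose A
    have hb := Matrix.posSemidef_self_mul_conjTranspose B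
    rw [Matrix.conjTranspose_eq_transpose_of_trivial] at ha hb
    exact ha.add hb
  refine Matrix.posDef_iff_dotProduct_mulVec.mpr ⟨hsd.1, fun x hx => ?_⟩
  have hval : dotProduct (star x) ((A * Aᵀ + B * Bᵀ) *ᵥ x)
      = dotProduct (Aᵀ *ᵥ x) (Aᵀ *ᵥ x) + dotProduct (Bᵀ *ᵥ x) (Bᵀ *ᵥ x) := by
    rw [star_trivial, Matrix.add_mulVec, dotProduct_add, ← Matrix.mulVec_mulVec,
      ← Matrix.mulVec_mulVec, Matrix.dotProduct_mulVec x A, Matrix.dotProduct_mulVec x B,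
      ← Matrix.mulVec_transpose, ← Matrix.mulVec_transpose]
  rw [hval]
  have nn : ∀ v : Fin n → ℝ, 0 ≤ dotProduct v v :=
    fun v => Finset.sum_nonneg fun i _ => mul_self_nonneg _
  rcases lt_or_eq_of_le (add_nonneg (nn _) (nn _) :
      (0:ℝ) ≤ dotProduct (Aᵀ *ᵥ x) (Aᵀ *ᵥ x) + dotProduct (Bᵀ *ᵥ x) (Bᵀ *ᵥ x)) with hlt | heq
  · exact hlt
  · exfalso
    have h1 : dotProduct (Aᵀ *ᵥ x) (Aᵀ *ᵥ x) = 0 := by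
      nlinarith [nn (Aᵀ *ᵥ x), nn (Bᵀ *ᵥ x)]
    have h2 : dotProduct (Bᵀ *ᵥ x) (Bᵀ *ᵥ x) = 0 := by
      nlinarith [nn (Aᵀ *ᵥ x), nn (Bᵀ *ᵥ x)]
    rw [dotProduct_self_eq_zero] at h1 h2
    apply hx
    calc x = (D * Aᵀ - C * Bᵀ) *ᵥ x := by rw [h]; simp
    _ = D *ᵥ (Aᵀ *ᵥ x) - C *ᵥ (Bᵀ *ᵥ x) := by
        rw [Matrix.sub_mulVec, Matrix.mulVec_mulVec, Matrix.mulVec_mulVec]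
    _ = 0 := by rw [h1, h2]; simp

end Aux

/-- for a symplectic matrix `S = [[A,B],[C,D]]`:
(i) `AAᵀ + BBᵀ` is symmetric positive definite; (ii) `A + iB` is invertible;
(iii) `(C + iD)(A + iB)⁻¹` has real part `(CAᵀ + DBᵀ)(AAᵀ + BBᵀ)⁻¹` and imaginary
part `(AAᵀ + BBᵀ)⁻¹`, which is symmetric positive definite. -/
theorem stmt9 (n : ℕ) (A B C D : Matrix (Fin n) (Fin n) ℝ)
    (hS : (Matrix.fromBlocks A B C D)ᵀ * Jmat n * Matrix.fromBlocks A B C D = Jmat n) :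
    (A * Aᵀ + B * Bᵀ).PosDef ∧
      IsUnit (cplx A + Complex.I • cplx B) ∧
      ((cplx C + Complex.I • cplx D) * (cplx A + Complex.I • cplx B)⁻¹).map Complex.re =
        (C * Aᵀ + D * Bᵀ) * (A * Aᵀ + B * Bᵀ)⁻¹ ∧
      ((cplx C + Complex.I • cplx D) * (cplx A + Complex.I • cplx B)⁻¹).map Complex.im =
        (A * Aᵀ + B * Bᵀ)⁻¹ ∧
      ((A * Aᵀ + B * Bᵀ)⁻¹).PosDef := by
  -- Step 1: extract the block identities from `S J Sᵀ = J`.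
  set S := Matrix.fromBlocks A B C D with hSdef
  set K := Jmat n with hK
  have hKK : K * K = -1 := by
    have h1 : (Matrix.fromBlocks (-1) 0 0 (-1) : Matrix (Fin n ⊕ Fin n) (Fin n ⊕ Fin n) ℝ)
        = -(Matrix.fromBlocks 1 0 0 1) := by rw [Matrix.fromBlocks_neg]; norm_num
    simp only [hK, Jmat, Matrix.fromBlocks_multiply]
    norm_num
    rw [h1, Matrix.fromBlocks_one]
  have hleft : (-(K * Sᵀ * K)) * S = 1 := by
    have : (-(K * Sᵀ * K)) * S = -(K * (Sᵀ * K * S)) := by noncomm_ring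
    rw [this, hS, hKK]; simp
  have hright : S * (-(K * Sᵀ * K)) = 1 := mul_eq_one_comm.mp hleft
  have hS2 : S * K * Sᵀ = K := by
    have h2 : S * K * Sᵀ = S * -(K * Sᵀ * K) * K + S * K * Sᵀ * (K * K + 1) := by
      noncomm_ring
    rw [h2, hKK, hright]; simp
  rw [hSdef, hK, Jmat, Matrix.fromBlocks_transpose, Matrix.fromBlocks_multiply,
    Matrix.fromBlocks_multiply] at hS2
  rw [Matrix.fromBlocks_inj] at hS2
  obtain ⟨e11, e12, e21, e22⟩ := hS2
  simp only [Matrix.mul_zero, Matrix.mul_one, Matrix.mul_neg, Matrix.zero_mul, Matrix.one_mul,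
    Matrix.neg_mul, add_zero, zero_add] at e11 e12 e21 e22
  have habt : A * Bᵀ = B * Aᵀ := by linear_combination (norm := noncomm_ring) e11
  have hdab : D * Aᵀ - C * Bᵀ = 1 := by linear_combination (norm := noncomm_ring) -e21
  -- Step 2: positive definiteness of G = AAᵀ + BBᵀ.
  set G := A * Aᵀ + B * Bᵀ with hGdef
  have hG : G.PosDef := posdef_G A B C D hdab
  have hdetG : G.det ≠ 0 := ne_of_gt hG.det_pos
  -- Step 3: invertibility of M = A + iB.
  set M := cplx A + Complex.I • cplx B with hMdef
  have hMH : Mᴴ = cplx Aᵀ - Complex.I • cplx Bᵀ := by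
    rw [hMdef, Matrix.conjTranspose_add, Matrix.conjTranspose_smul, cplx_conjT, cplx_conjT]
    simp [Complex.star_def, Complex.conj_I, sub_eq_add_neg]
  have hMMH : M * Mᴴ = cplx G := by
    rw [hMH, hMdef]
    have e1 : cplx A * cplx Bᵀ = cplx B * cplx Aᵀ := by
      rw [← cplx_mul, ← cplx_mul, habt]
    rw [hGdef, cplx_add, cplx_mul, cplx_mul]
    simp only [add_mul, mul_sub, smul_mul_assoc, mul_smul_comm, smul_add, smul_sub, smul_smul,
      Complex.I_mul_I, neg_one_smul, e1]
    abel
  have hdetGc : (cplx G).det ≠ 0 := by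
    rw [cplx_det]; exact_mod_cast hdetG
  have hMdet : M.det ≠ 0 := by
    intro h
    apply hdetGc
    rw [← hMMH, Matrix.det_mul, h, zero_mul]
  have hMunit : IsUnit M := (Matrix.isUnit_iff_isUnit_det M).mpr hMdet.isUnit
  -- Step 4: compute M⁻¹ and Z = (C + iD) M⁻¹.
  have hGcinv : cplx G * cplx G⁻¹ = 1 := by
    rw [← cplx_mul, Matrix.mul_nonsing_inv _ hdetG.isUnit, cplx_one]
  have hMinv : M⁻¹ = Mᴴ * cplx G⁻¹ :=
    Matrix.inv_eq_right_inv (by rw [← Matrix.mul_assoc, hMMH, hGcinv])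
  have h3 : (cplx C + Complex.I • cplx D) * Mᴴ = cplx (C * Aᵀ + D * Bᵀ) + Complex.I • 1 := by
    rw [hMH]
    have e2 : cplx D * cplx Aᵀ - cplx C * cplx Bᵀ = 1 := by
      rw [← cplx_mul, ← cplx_mul, ← cplx_sub, hdab, cplx_one]
    rw [cplx_add, cplx_mul, cplx_mul, ← e2]
    simp only [add_mul, mul_sub, smul_mul_assoc, mul_smul_comm, smul_add, smul_sub, smul_smul,
      Complex.I_mul_I, neg_one_smul]
    abel
  have hZ : (cplx C + Complex.I • cplx D) * M⁻¹
      = cplx ((C * Aᵀ + D * Bᵀ) * G⁻¹) + Complex.I • cplx G⁻¹ := by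
    rw [hMinv, ← Matrix.mul_assoc, h3, Matrix.add_mul, Matrix.smul_mul, Matrix.one_mul,
      ← cplx_mul]
  refine ⟨hG, hMunit, ?_, ?_, hG.inv⟩
  · rw [hZ, cplx_map_re]
  · rw [hZ, cplx_map_im]
end
end
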